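/- arXiv:2107.02705 — 4 statements merged into one kernel-verified Lean document; each statement's English description precedes it below -/
import Mathlib

section
/- Suppose R is a principal ideal domain, a_1 ≠ 0, and n > 2. Then S = U_1 if and only if a_1^{n−2} = (a_1,a_2)·(a_1,a_3)⋯(a_1,a_n) up to multiplication by a unit of R. -/
private lemma coprime_of_forall_dvd {R : Type*} [CommRing R] [IsPrincipalIdealRing R]
    {x y : R} (h : ∀ g : R, g ∣ x → g ∣ y → IsUnit g) : IsCoprime x y := by
  set g := Submodule.IsPrincipal.generator (Ideal.span ({x, y} : Set R)) with hg
  have hspan : Ideal.span ({g} : Set R) = Ideal.span {x, y} :=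
    Ideal.span_singleton_generator _
  have hgx : g ∣ x := Ideal.mem_span_singleton.mp (hspan ▸ Ideal.subset_span (by simp))
  have hgy : g ∣ y := Ideal.mem_span_singleton.mp (hspan ▸ Ideal.subset_span (by simp))
  have htop : Ideal.span ({x, y} : Set R) = ⊤ := by
    rw [← hspan, Ideal.span_singleton_eq_top]; exact h g hgx hgy
  have h1 : (1 : R) ∈ Ideal.span ({x, y} : Set R) := by rw [htop]; trivial
  obtain ⟨s, t, hst⟩ := Ideal.mem_span_pair.mp h1
  exact ⟨s, t, hst⟩

/-- `S = U₁` if and only if `a₁^{n−2} = (a₁,a₂)⋯(a₁,aₙ)` up to a unit.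
Here `n = m + 1`; `v j = v(1, j+2)` and `u j = u(1, j+2)` for `j : Fin m`,
where `c j` is a gcd of `a₁` and `a_{j+2}`. -/
theorem stmt_15 {R : Type*} [CommRing R] [IsDomain R] [IsPrincipalIdealRing R]
    {m : ℕ} (hm : 2 ≤ m) (a : Fin (m + 1) → R)
    (huni : Ideal.span (Set.range a) = ⊤) (ha1 : a 0 ≠ 0)
    (S : Submodule R (Fin (m + 1) → R))
    (hS : ∀ x, x ∈ S ↔ ∑ i, a i * x i = 0)
    (v : Fin m → Fin (m + 1) → R)
    (hv : ∀ j k, v j k = if k = 0 then -a j.succ else if k = j.succ then a 0 else 0)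
    (c : Fin m → R) (hc : ∀ j, Ideal.span {c j} = Ideal.span {a 0, a j.succ})
    (u : Fin m → Fin (m + 1) → R)
    (hu : ∀ j, c j • u j = v j)
    (U1 : Submodule R (Fin (m + 1) → R))
    (hU1 : U1 = Submodule.span R (Set.range u)) :
    S = U1 ↔ Associated (a 0 ^ (m - 1)) (∏ j : Fin m, c j) := by
  classical
  set α : R := a 0 with hαdef
  set b : Fin m → R := fun j => a j.succ with hbdef
  have hα : α ≠ 0 := ha1
  -- basic gcd facts
  have hcα : ∀ j, c j ∣ α := by
    intro j
    exact Ideal.mem_span_singleton.mp ((hc j) ▸ Ideal.subset_span (by simp))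
  have hcb : ∀ j, c j ∣ b j := by
    intro j
    exact Ideal.mem_span_singleton.mp ((hc j) ▸ Ideal.subset_span (by simp [hbdef]))
  have hc0 : ∀ j, c j ≠ 0 := by
    intro j h0
    exact hα (by simpa [h0] using hcα j)
  choose d hd using hcα
  choose b' hb' using hcb
  have hcb2 : ∀ j, c j ∣ b j := fun j => ⟨b' j, hb' j⟩
  have hd0 : ∀ j, d j ≠ 0 := by
    intro j h0
    exact hα (by rw [hd j, h0, mul_zero])
  have hdα : ∀ j, d j ∣ α := fun j => ⟨c j, by rw [hd j, mul_comm]⟩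
  have hcz : ∀ j, ∃ s t : R, s * α + t * b j = c j := by
    intro j
    exact Ideal.mem_span_pair.mp ((hc j).symm ▸ Ideal.subset_span rfl)
  have hcop_db' : ∀ j, IsCoprime (d j) (b' j) := by
    intro j
    obtain ⟨s, t, hst⟩ := hcz j
    refine ⟨s, t, mul_left_cancel₀ (hc0 j) ?_⟩
    rw [mul_one]
    linear_combination hst - s * hd j - t * hb' j
  -- unimodularity consequences
  have hone : ∃ r : Fin (m + 1) → R, ∑ i, r i * a i = 1 := by
    have h1 : (1 : R) ∈ Ideal.span (Set.range a) := by rw [huni]; trivial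
    obtain ⟨r, hr⟩ := (Submodule.mem_span_range_iff_exists_fun R).mp h1
    exact ⟨r, by simpa [smul_eq_mul] using hr⟩
  have hunit : ∀ g : R, g ∣ α → (∀ j, g ∣ b j) → IsUnit g := by
    intro g hgα hgb
    obtain ⟨r, hr⟩ := hone
    refine isUnit_of_dvd_one (hr ▸ ?_)
    rw [Fin.sum_univ_succ]
    exact dvd_add (Dvd.dvd.mul_left hgα _)
      (Finset.dvd_sum fun j _ => Dvd.dvd.mul_left (hgb j) _)
  -- explicit description of u
  have hu0 : ∀ j, u j 0 = -(b' j) := by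
    intro j
    have h1 : c j * u j 0 = -(b j) := by simpa [hv] using congrFun (hu j) 0
    refine mul_left_cancel₀ (hc0 j) (h1.trans ?_)
    rw [hb' j]; ring
  have hus : ∀ j, u j j.succ = d j := by
    intro j
    have h1 : c j * u j j.succ = α := by
      simpa [hv, Fin.succ_ne_zero] using congrFun (hu j) j.succ
    exact mul_left_cancel₀ (hc0 j) (h1.trans (hd j))
  have huo : ∀ j k, j ≠ k → u j k.succ = 0 := by
    intro j k hjk
    have h1 : c j * u j k.succ = 0 := by
      simpa [hv, Fin.succ_ne_zero, Fin.succ_inj, Ne.symm hjk] using congrFun (hu j) k.succ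
    exact (mul_eq_zero.mp h1).resolve_left (hc0 j)
  have hb_eq : ∀ j : Fin m, a j.succ = b j := fun _ => rfl
  have hα_eq : a 0 = α := rfl
  have huS : ∀ j, u j ∈ S := by
    intro j
    rw [hS, Fin.sum_univ_succ, hu0 j]
    have h2 : ∑ k : Fin m, a k.succ * u j k.succ = b j * d j := by
      rw [Finset.sum_eq_single j (fun k _ hkj => by rw [huo j k (Ne.symm hkj), mul_zero])
        (by simp), hus j, hb_eq]
    rw [h2, hα_eq]
    linear_combination (-(b' j)) * hd j + d j * hb' j
  have hmain₁ : (S = U1) ↔ ∀ y : Fin m → R, α ∣ (∑ j, b j * y j) → ∀ k, d k ∣ y k := by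
    constructor
    · intro hSU y hy k
      obtain ⟨q, hq⟩ := hy
      have hx : Fin.cons (-q) y ∈ S := by
        rw [hS, Fin.sum_univ_succ]
        simp only [Fin.cons_zero, Fin.cons_succ, hα_eq, hb_eq]
        linear_combination hq
      rw [hSU, hU1] at hx
      obtain ⟨t, ht⟩ := (Submodule.mem_span_range_iff_exists_fun R).mp hx
      have h2 := congrFun ht k.succ
      rw [Finset.sum_apply] at h2
      simp only [Pi.smul_apply, smul_eq_mul, Fin.cons_succ] at h2
      rw [Finset.sum_eq_single k (fun j _ hjk => by rw [huo j k hjk, mul_zero]) (by simp),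
        hus k] at h2
      exact ⟨t k, h2.symm.trans (mul_comm _ _)⟩
    · intro hP
      apply le_antisymm
      · intro x hx
        have hx' := (hS x).mp hx
        rw [Fin.sum_univ_succ] at hx'
        simp only [hα_eq, hb_eq] at hx'
        have hy : α ∣ ∑ j, b j * x j.succ := ⟨-(x 0), by linear_combination hx'⟩
        choose t ht using fun k => hP (fun j => x j.succ) hy k
        rw [hU1]
        refine (Submodule.mem_span_range_iff_exists_fun R).mpr ⟨t, funext fun i => ?_⟩
        rw [Finset.sum_apply]
        simp only [Pi.smul_apply, smul_eq_mul]
        refine Fin.cases ?_ ?_ i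
        · have hterm : ∀ j : Fin m, α * (t j * u j 0) = -(b j * x j.succ) := by
            intro j
            rw [hu0 j, ht j, hb' j]
            linear_combination (-(t j * b' j)) * hd j
          refine mul_left_cancel₀ hα ?_
          calc α * ∑ j : Fin m, t j * u j 0 = ∑ j : Fin m, α * (t j * u j 0) :=
                Finset.mul_sum _ _ _
            _ = ∑ j : Fin m, -(b j * x j.succ) := Finset.sum_congr rfl fun j _ => hterm j
            _ = α * x 0 := by
                rw [Finset.sum_neg_distrib]
                linear_combination -hx'
        · intro k
          rw [Finset.sum_eq_single k (fun j _ hjk => by rw [huo j k hjk, mul_zero]) (by simp),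
            hus k, ht k, mul_comm]
      · rw [hU1]
        exact Submodule.span_le.mpr (by rintro _ ⟨j, rfl⟩; exact huS j)
  -- arithmetic part
  have hprod_cd : (∏ j : Fin m, c j) * (∏ j : Fin m, d j) = α ^ m := by
    rw [← Finset.prod_mul_distrib]
    calc ∏ j : Fin m, c j * d j = ∏ _j : Fin m, α :=
          Finset.prod_congr rfl fun j _ => (hd j).symm
      _ = α ^ m := by rw [Finset.prod_const, Finset.card_univ, Fintype.card_fin]
  have hαm : α ^ m = α ^ (m - 1) * α := by
    rw [← pow_succ, Nat.sub_add_cancel (by omega)]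
  have hAiff : Associated (α ^ (m - 1)) (∏ j : Fin m, c j) ↔
      Associated α (∏ j : Fin m, d j) := by
    constructor
    · rintro ⟨ε, hε⟩
      refine Associated.symm ⟨ε, mul_left_cancel₀ (pow_ne_zero (m - 1) hα) ?_⟩
      calc α ^ (m - 1) * ((∏ j : Fin m, d j) * ε)
          = (α ^ (m - 1) * ε) * ∏ j : Fin m, d j := by ring
        _ = (∏ j : Fin m, c j) * (∏ j : Fin m, d j) := by rw [hε]
        _ = α ^ (m - 1) * α := by rw [hprod_cd, hαm]
    · rintro ⟨ε, hε⟩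
      refine Associated.symm ⟨ε, mul_left_cancel₀ hα ?_⟩
      calc α * ((∏ j : Fin m, c j) * ε)
          = (∏ j : Fin m, c j) * (α * ε) := by ring
        _ = (∏ j : Fin m, c j) * (∏ j : Fin m, d j) := by rw [hε]
        _ = α * α ^ (m - 1) := by rw [hprod_cd, hαm]; ring
  rw [hmain₁, hAiff]
  constructor
  · intro hP
    have hdc : ∀ k j : Fin m, j ≠ k → d k ∣ c j := by
      intro k j hjk
      obtain ⟨s, t, hst⟩ := hcz j
      set y : Fin m → R := Pi.single k (c j) + Pi.single j (-(t * b k)) with hy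
      have hyk : y k = c j := by
        simp [hy, Pi.single_apply, Ne.symm hjk]
      have hsum : ∑ i, b i * y i = α * (b k * s) := by
        have h1 : ∑ i, b i * y i = b k * c j + b j * -(t * b k) := by
          simp only [hy, Pi.add_apply, mul_add, Finset.sum_add_distrib, Pi.single_apply,
            mul_ite, mul_zero]
          rw [Finset.sum_ite_eq' Finset.univ k, Finset.sum_ite_eq' Finset.univ j]
          simp
        rw [h1]
        linear_combination (-(b k)) * hst
      have hk := hP y ⟨b k * s, hsum⟩ k
      rwa [hyk] at hk
    have hcopd : Pairwise (Function.onFun IsCoprime d) := by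
      intro i k hik
      refine coprime_of_forall_dvd fun g hgi hgk => hunit g (hgi.trans (hdα i)) fun j => ?_
      by_cases hji : j = i
      · subst hji
        exact (hgk.trans (hdc k j hik)).trans (hcb2 j)
      · exact (hgi.trans (hdc i j hji)).trans (hcb2 j)
    have h1 : (∏ j : Fin m, d j) ∣ α := Fintype.prod_dvd_of_coprime hcopd fun i => hdα i
    have hctop : (1 : R) ∈ Ideal.span (Set.range c) := by
      have hle : Ideal.span (Set.range a) ≤ Ideal.span (Set.range c) := by
        rw [Ideal.span_le]
        rintro _ ⟨i, rfl⟩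
        refine Fin.cases ?_ ?_ i
        · have h2 : α ∈ Ideal.span (Set.range c) := by
            rw [hd ⟨0, by omega⟩]
            exact Ideal.mul_mem_right _ _ (Ideal.subset_span ⟨_, rfl⟩)
          exact h2
        · intro j
          have h2 : b j ∈ Ideal.span (Set.range c) := by
            rw [hb' j]
            exact Ideal.mul_mem_right _ _ (Ideal.subset_span ⟨_, rfl⟩)
          exact h2
      have h1a : (1 : R) ∈ Ideal.span (Set.range a) := by rw [huni]; trivial
      exact hle h1a
    obtain ⟨s, hs⟩ := (Submodule.mem_span_range_iff_exists_fun R).mp hctop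
    have h2 : α ∣ ∏ j : Fin m, d j := by
      have hrw : (∏ j : Fin m, d j) = ∑ j : Fin m, s j * c j * ∏ j' : Fin m, d j' := by
        rw [← Finset.sum_mul]
        have hs1 : ∑ j : Fin m, s j * c j = 1 := by simpa [smul_eq_mul] using hs
        rw [hs1, one_mul]
      rw [hrw]
      refine Finset.dvd_sum fun j _ => ?_
      have h3 : s j * c j * ∏ j' : Fin m, d j' =
          α * (s j * ∏ j' ∈ Finset.univ.erase j, d j') := by
        rw [← Finset.mul_prod_erase Finset.univ d (Finset.mem_univ j), hd j]; ring
      rw [h3]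
      exact Dvd.intro _ rfl
    exact associated_of_dvd_dvd h2 h1
  · intro hA y hy k
    have hdc : ∀ j : Fin m, j ≠ k → d k ∣ c j := by
      intro j hjk
      obtain ⟨ε, hε⟩ := hA
      have h3 : d j * (c j * ε) = d j * ∏ j' ∈ Finset.univ.erase j, d j' := by
        rw [Finset.mul_prod_erase Finset.univ d (Finset.mem_univ j), ← hε, hd j]; ring
      have h4 : c j * (ε : R) = ∏ j' ∈ Finset.univ.erase j, d j' :=
        mul_left_cancel₀ (hd0 j) h3
      have h5 : d k ∣ c j * (ε : R) := by
        rw [h4]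
        exact Finset.dvd_prod_of_mem d (Finset.mem_erase.mpr ⟨Ne.symm hjk, Finset.mem_univ k⟩)
      exact Units.dvd_mul_right.mp h5
    have hck : IsCoprime (d k) (c k) := by
      refine coprime_of_forall_dvd fun g hgd hgc => hunit g (hgc.trans ⟨d k, hd k⟩) fun j => ?_
      by_cases hjk : j = k
      · subst hjk
        exact hgc.trans (hcb2 j)
      · exact (hgd.trans (hdc j hjk)).trans (hcb2 j)
    have h4 : d k ∣ b k * y k := by
      have h5 : d k ∣ ∑ i, b i * y i := (hdα k).trans hy
      have h6 : d k ∣ ∑ i ∈ Finset.univ.erase k, b i * y i :=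
        Finset.dvd_sum fun i hi =>
          (((hdc i (Finset.mem_erase.mp hi).1).trans (hcb2 i)).mul_right _)
      have h7 : b k * y k =
          (∑ i, b i * y i) - ∑ i ∈ Finset.univ.erase k, b i * y i := by
        rw [← Finset.add_sum_erase Finset.univ _ (Finset.mem_univ k)]; ring
      rw [h7]
      exact dvd_sub h5 h6
    have h8 : IsCoprime (d k) (c k * b' k) := hck.mul_right (hcop_db' k)
    refine h8.dvd_of_dvd_mul_left ?_
    rw [← hb' k]
    exact h4
end

section
/- Suppose R is a principal ideal domain, n > 2, and p_1,…,p_n ∈ R are pairwise nonassociate primes. Suppose a_i = Π_{j≠i} p_j^{e_{i,j}} for 1 ≤ i ≤ n, where the exponents satisfy e_{1,j} ≤ e_{i,j} whenever 1, i, j are distinct, and suppose (a_1,…,a_n) is unimodular. Then S = U_1 and {u(1,2),…,u(1,n)} is an R-basis of S. -/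
/-- If `p₁,…,pₙ` are pairwise nonassociate primes and
`aᵢ = Π_{j≠i} pⱼ^{e_{i,j}}` with `e_{1,j} ≤ e_{i,j}` whenever `1, i, j` are
distinct, then `S = U₁` and `{u(1,2),…,u(1,n)}` is an `R`-basis of `S`.
Here `n = m + 2`; `v j = v(1, j+2)` and `u j = u(1, j+2)` for `j : Fin (m+1)`,
where `c j` is a gcd of `a₁` and `a_{j+2}`. -/
theorem stmt_16 {R : Type*} [CommRing R] [IsDomain R] [IsPrincipalIdealRing R]
    {m : ℕ} (hm : 1 ≤ m) (a : Fin (m + 2) → R)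
    (p : Fin (m + 2) → R) (hp : ∀ j, Prime (p j))
    (hpna : ∀ i j, i ≠ j → ¬Associated (p i) (p j))
    (e : Fin (m + 2) → Fin (m + 2) → ℕ)
    (ha : ∀ i, a i = ∏ j ∈ Finset.univ.erase i, p j ^ e i j)
    (he : ∀ i j : Fin (m + 2), i ≠ 0 → j ≠ 0 → i ≠ j → e 0 j ≤ e i j)
    (huni : Ideal.span (Set.range a) = ⊤)
    (S : Submodule R (Fin (m + 2) → R))
    (hS : ∀ x, x ∈ S ↔ ∑ i, a i * x i = 0)
    (v : Fin (m + 1) → Fin (m + 2) → R)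
    (hv : ∀ j k, v j k = if k = 0 then -a j.succ else if k = j.succ then a 0 else 0)
    (c : Fin (m + 1) → R) (hc : ∀ j, Ideal.span {c j} = Ideal.span {a 0, a j.succ})
    (u : Fin (m + 1) → Fin (m + 2) → R)
    (hu : ∀ j, c j • u j = v j)
    (U1 : Submodule R (Fin (m + 2) → R))
    (hU1 : U1 = Submodule.span R (Set.range u)) :
    S = U1 ∧ ∃ b : Module.Basis (Fin (m + 1)) R S,
      ∀ j, (b j : Fin (m + 2) → R) = u j := by
  classical
  have hpne : ∀ k, p k ≠ 0 := fun k => (hp k).ne_zero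
  have hane : ∀ i, a i ≠ 0 := by
    intro i
    rw [ha i]
    exact Finset.prod_ne_zero_iff.2 fun k _ => pow_ne_zero _ (hpne k)
  set g : Fin (m + 1) → R := fun j => p j.succ ^ e 0 j.succ with hg
  set d : Fin (m + 1) → R :=
    fun j => ∏ k ∈ (Finset.univ.erase 0).erase j.succ, p k ^ e 0 k with hd
  have ha0gd : ∀ j : Fin (m + 1), a 0 = g j * d j := by
    intro j
    rw [ha 0, ← Finset.mul_prod_erase _ _
      (show j.succ ∈ Finset.univ.erase (0 : Fin (m + 2)) by
        simp [Fin.succ_ne_zero])]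
  have hcdvd0 : ∀ j, c j ∣ a 0 := by
    intro j
    rw [← Ideal.mem_span_singleton, hc j]
    exact Ideal.subset_span (by simp)
  have hcne : ∀ j, c j ≠ 0 := by
    intro j h
    exact hane 0 (zero_dvd_iff.1 (h ▸ hcdvd0 j))
  -- d j divides a j.succ
  have hddvda : ∀ j, d j ∣ a j.succ := by
    intro j
    rw [ha j.succ]
    have h0mem : (0 : Fin (m + 2)) ∈ Finset.univ.erase j.succ := by
      simp [(Fin.succ_ne_zero j).symm]
    rw [← Finset.mul_prod_erase _ _ h0mem, Finset.erase_right_comm]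
    refine Dvd.dvd.mul_left ?_ _
    refine Finset.prod_dvd_prod_of_dvd _ _ fun k hk => ?_
    simp only [Finset.mem_erase, Finset.mem_univ, and_true] at hk
    exact pow_dvd_pow _ (he j.succ k (Fin.succ_ne_zero j) hk.2 (Ne.symm hk.1))
  -- d j divides c j
  have hddvdc : ∀ j, d j ∣ c j := by
    intro j
    rw [← Ideal.mem_span_singleton]
    have hle : Ideal.span {a 0, a j.succ} ≤ Ideal.span {d j} := by
      rw [Ideal.span_le]
      rintro x hx
      simp only [Set.mem_insert_iff, Set.mem_singleton_iff] at hx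
      rcases hx with rfl | rfl
      · exact Ideal.mem_span_singleton.2 ⟨g j, by rw [ha0gd j, mul_comm]⟩
      · exact Ideal.mem_span_singleton.2 (hddvda j)
    exact hle (by rw [← hc j]; exact Ideal.mem_span_singleton_self _)
  -- g j divides a i for i ≠ j.succ
  have hgdvda : ∀ (j : Fin (m + 1)) (i : Fin (m + 2)), i ≠ j.succ → g j ∣ a i := by
    intro j i hi
    rw [ha i]
    refine dvd_trans ?_ (Finset.dvd_prod_of_mem _
      (show j.succ ∈ Finset.univ.erase i by simp [Ne.symm hi]))
    by_cases hi0 : i = 0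
    · subst hi0; exact dvd_rfl
    · exact pow_dvd_pow _ (he i j.succ hi0 (Fin.succ_ne_zero j) hi)
  -- p j.succ does not divide a j.succ
  have hpnd : ∀ j : Fin (m + 1), ¬ p j.succ ∣ a j.succ := by
    intro j hdvd
    rw [ha j.succ] at hdvd
    obtain ⟨k, hk, hdk⟩ := ((hp j.succ).dvd_finset_prod_iff _).1 hdvd
    simp only [Finset.mem_erase, Finset.mem_univ, and_true] at hk
    exact hpna j.succ k (Ne.symm hk)
      ((hp j.succ).associated_of_dvd (hp k) ((hp j.succ).dvd_of_dvd_pow hdk))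
  -- for x ∈ S, g j divides x j.succ
  have hgdvdx : ∀ x, x ∈ S → ∀ j : Fin (m + 1), g j ∣ x j.succ := by
    intro x hx j
    have heq := (hS x).1 hx
    have hsum : a j.succ * x j.succ
        = -∑ i ∈ Finset.univ.erase j.succ, a i * x i := by
      have h1 := Finset.add_sum_erase Finset.univ (fun i => a i * x i)
        (Finset.mem_univ j.succ)
      rw [heq] at h1
      exact eq_neg_of_add_eq_zero_left h1
    have hgs : g j ∣ a j.succ * x j.succ := by
      rw [hsum]
      refine dvd_neg.2 (Finset.dvd_sum fun i hi => ?_)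
      simp only [Finset.mem_erase, Finset.mem_univ, and_true] at hi
      exact (hgdvda j i hi).mul_right _
    exact (hp j.succ).pow_dvd_of_dvd_mul_left _ (hpnd j) hgs
  have hvu : ∀ j k, c j * u j k = v j k := fun j k => congrFun (hu j) k
  -- ∑ a i * v j i = 0
  have hsumv : ∀ j : Fin (m + 1), ∑ i, a i * v j i = 0 := by
    intro j
    rw [Fin.sum_univ_succ]
    have h0 : a 0 * v j 0 = a 0 * -a j.succ := by rw [hv]; simp
    have hsucc : ∀ k : Fin (m + 1),
        a k.succ * v j k.succ = if k = j then a k.succ * a 0 else 0 := by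
      intro k
      rw [hv, if_neg (Fin.succ_ne_zero k)]
      by_cases hkj : k = j
      · subst hkj; simp
      · rw [if_neg (fun h => hkj (Fin.succ_injective _ h)), if_neg hkj, mul_zero]
    rw [h0, Finset.sum_congr rfl fun k _ => hsucc k, Finset.sum_ite_eq']
    simp only [Finset.mem_univ, if_pos]
    ring
  have huS : ∀ j, u j ∈ S := by
    intro j
    rw [hS]
    have h0 : c j * ∑ i, a i * u j i = 0 := by
      rw [Finset.mul_sum]
      rw [Finset.sum_congr rfl (fun i _ => by
        rw [show c j * (a i * u j i) = a i * (c j * u j i) by ring, hvu])]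
      exact hsumv j
    exact (mul_eq_zero.1 h0).resolve_left (hcne j)
  -- S ≤ U1
  have hSle : S ≤ Submodule.span R (Set.range u) := by
    intro x hx
    have heq := (hS x).1 hx
    have hdvd : ∀ j : Fin (m + 1), a 0 ∣ x j.succ * c j := by
      intro j
      rw [ha0gd j]
      exact mul_dvd_mul (hgdvdx x hx j) (hddvdc j)
    choose t ht using hdvd
    have hxe : x = ∑ j, t j • u j := by
      funext k
      refine mul_left_cancel₀ (hane 0) ?_
      have hrhs : a 0 * (∑ j, t j • u j) k = ∑ j, x j.succ * v j k := by
        rw [Finset.sum_apply, Finset.mul_sum]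
        refine Finset.sum_congr rfl fun j _ => ?_
        have : a 0 * (t j • u j) k = (a 0 * t j) * u j k := by
          simp [mul_assoc]
        rw [this, ← ht j, mul_assoc, hvu]
      rw [hrhs]
      induction k using Fin.cases with
      | zero =>
        have heq2 : a 0 * x 0 + ∑ j : Fin (m + 1), a j.succ * x j.succ = 0 := by
          rw [← Fin.sum_univ_succ (fun i => a i * x i)]
          exact heq
        have h3 : ∀ j : Fin (m + 1), x j.succ * v j 0 = -(a j.succ * x j.succ) := by
          intro j; rw [hv]; simp; ring
        rw [Finset.sum_congr rfl fun j _ => h3 j, Finset.sum_neg_distrib]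
        have h4 : ∑ j : Fin (m + 1), a j.succ * x j.succ = -(a 0 * x 0) :=
          eq_neg_of_add_eq_zero_right heq2
        rw [h4, neg_neg]
      | succ i =>
        have h3 : ∀ j : Fin (m + 1),
            x j.succ * v j i.succ = if j = i then x j.succ * a 0 else 0 := by
          intro j
          rw [hv, if_neg (Fin.succ_ne_zero i)]
          by_cases hji : j = i
          · subst hji; simp
          · rw [if_neg (fun h => hji (Fin.succ_injective _ h).symm),
              if_neg hji, mul_zero]
        rw [Finset.sum_congr rfl fun j _ => h3 j, Finset.sum_ite_eq']
        simp only [Finset.mem_univ, if_pos]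
        ring
    rw [hxe]
    exact Submodule.sum_mem _ fun j _ =>
      Submodule.smul_mem _ _ (Submodule.subset_span ⟨j, rfl⟩)
  have hU1le : Submodule.span R (Set.range u) ≤ S := by
    rw [Submodule.span_le]
    rintro _ ⟨j, rfl⟩
    exact huS j
  have hSU : S = U1 := by
    rw [hU1]
    exact le_antisymm hSle hU1le
  -- linear independence
  have hu_ne : ∀ j : Fin (m + 1), u j j.succ ≠ 0 := by
    intro j h
    have h2 := hvu j j.succ
    rw [h, mul_zero, hv] at h2
    simp only [Fin.succ_ne_zero, if_false, if_pos rfl] at h2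
    exact hane 0 h2.symm
  have hu_zero : ∀ i j : Fin (m + 1), j ≠ i → u j i.succ = 0 := by
    intro i j hij
    have h2 := hvu j i.succ
    rw [hv] at h2
    simp only [Fin.succ_ne_zero, if_false, Fin.succ_inj] at h2
    rw [if_neg (fun h : i = j => hij h.symm)] at h2
    exact (mul_eq_zero.1 h2).resolve_left (hcne j)
  have hli : LinearIndependent R u := by
    rw [Fintype.linearIndependent_iff]
    intro tt htsum i
    have h2 := congrFun htsum i.succ
    rw [Finset.sum_apply] at h2
    simp only [Pi.smul_apply, smul_eq_mul, Pi.zero_apply] at h2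
    rw [Finset.sum_eq_single i (fun j _ hj => by rw [hu_zero i j hj, mul_zero])
      (fun h => absurd (Finset.mem_univ i) h)] at h2
    exact (mul_eq_zero.1 h2).resolve_right (hu_ne i)
  refine ⟨hSU, ?_⟩
  have hSspan : S = Submodule.span R (Set.range u) := hSU.trans hU1
  refine ⟨(Module.Basis.span hli).map (LinearEquiv.ofEq _ _ hSspan.symm), fun j => ?_⟩
  simp [Module.Basis.map_apply, Module.Basis.span_apply]
end

section
/- Let π be any permutation of {2,…,n}. Let d_2,…,d_{n−1} be defined from (a_2,…,a_n) by d_i = a_1·(a_1,…,a_{i+1}) / ((a_1,a_{i+1})·(a_1,…,a_i)), and let d_2',…,d_{n−1}' be defined by the same formula from (a_{π(2)},…,a_{π(n)}). Then for any prime p of R, the multiset of p-parts of d_2,…,d_{n−1} equals the multiset of p-parts of d_2',…,d_{n−1}' (equivalently, the multiset of p-adic valuations of the d_i coincides with that of the d_i'). -/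
private lemma dvd_span_iff' {R : Type*} [CommRing R] {x : R} {S : Set R}
    (h : Ideal.span ({x} : Set R) = Ideal.span S) (y : R) :
    y ∣ x ↔ ∀ z ∈ S, y ∣ z := by
  have h2 : x ∈ Ideal.span {y} ↔ S ⊆ (Ideal.span {y} : Ideal R) := by
    rw [← Ideal.span_singleton_le_iff_mem, h, Ideal.span_le]
  constructor
  · intro hyx z hz
    exact Ideal.mem_span_singleton.mp (h2.mp (Ideal.mem_span_singleton.mpr hyx) hz)
  · intro hall
    exact Ideal.mem_span_singleton.mp
      (h2.mpr (fun z hz => Ideal.mem_span_singleton.mpr (hall z hz)))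

private lemma exists_perm_of_perm_ofFn {n : ℕ} {f g : Fin n → ℕ}
    (h : (List.ofFn f).Perm (List.ofFn g)) :
    ∃ σ : Equiv.Perm (Fin n), ∀ i, f i = g (σ i) := by
  have h1 : Monotone (f ∘ Tuple.sort f) := Tuple.monotone_sort f
  have h2 : Monotone (g ∘ Tuple.sort g) := Tuple.monotone_sort g
  have hp : (List.ofFn (f ∘ Tuple.sort f)).Perm (List.ofFn (g ∘ Tuple.sort g)) :=
    ((Tuple.sort f).ofFn_comp_perm f).trans (h.trans ((Tuple.sort g).ofFn_comp_perm g).symm)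
  have heq : f ∘ Tuple.sort f = g ∘ Tuple.sort g :=
    List.ofFn_injective (hp.eq_of_sortedLE h1.sortedLE_ofFn h2.sortedLE_ofFn)
  refine ⟨(Tuple.sort f).symm.trans (Tuple.sort g), fun i => ?_⟩
  have := congrFun heq ((Tuple.sort f).symm i)
  simpa using this

private lemma combin' (A : ℕ) : ∀ (k : ℕ) (E P : Fin (k+1) → ℕ) (D : Fin k → ℕ),
    (∀ j, E j ≤ A) → (∀ j, P j ≤ A) → P 0 = E 0 →
    (∀ j : Fin k, P j.succ = min (P j.castSucc) (E j.succ)) →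
    (∀ i : Fin k, D i + (E i.succ + P i.castSucc) = A + P i.succ) →
    (List.ofFn D : Multiset ℕ) + {A - P (Fin.last k)}
      = (List.ofFn (fun j => A - E j) : Multiset ℕ) := by
  intro k
  induction k with
  | zero =>
    intro E P D _ _ hP0 _ _
    have : Fin.last 0 = 0 := rfl
    simp [List.ofFn_succ, this, hP0]
  | succ k IH =>
    intro E P D hEA hPA hP0 hPs hD
    have hrec := IH (fun j => E j.castSucc) (fun j => P j.castSucc) (fun i => D i.castSucc)
      (fun j => hEA _) (fun j => hPA _)
      (by simpa using hP0)
      (fun j => by simpa [Fin.succ_castSucc, -Fin.castSucc_succ] using hPs j.castSucc)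
      (fun i => by simpa [Fin.succ_castSucc, -Fin.castSucc_succ] using hD i.castSucc)
    have hkey := hD (Fin.last k)
    have hmin := hPs (Fin.last k)
    have h1 : E (Fin.last k).succ ≤ A := hEA _
    have h2 : P (Fin.last k).castSucc ≤ A := hPA _
    have hls : (Fin.last k).succ = Fin.last (k+1) := Fin.succ_last k
    rw [← hls]
    have hpair : ({D (Fin.last k)} : Multiset ℕ) + {A - P (Fin.last k).succ}
        = {A - P ((Fin.last k).castSucc)} + {A - E ((Fin.last k).succ)} := by
      rcases le_total (E (Fin.last k).succ) (P (Fin.last k).castSucc) with h | h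
      · have hm : P (Fin.last k).succ = E (Fin.last k).succ := by omega
        have hDv : D (Fin.last k) = A - P (Fin.last k).castSucc := by omega
        rw [hm, hDv]
      · have hm : P (Fin.last k).succ = P (Fin.last k).castSucc := by omega
        have hDv : D (Fin.last k) = A - E (Fin.last k).succ := by omega
        rw [hm, hDv, add_comm]
    have hsplitD : (List.ofFn D : Multiset ℕ)
        = (List.ofFn (fun i => D i.castSucc) : Multiset ℕ) + {D (Fin.last k)} := by
      rw [List.ofFn_succ', List.concat_eq_append, ← Multiset.coe_add, Multiset.coe_singleton]
    have hsplitE : (List.ofFn (fun j => A - E j) : Multiset ℕ)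
        = (List.ofFn (fun j : Fin (k+1) => A - E j.castSucc) : Multiset ℕ)
            + {A - E ((Fin.last k).succ)} := by
      rw [List.ofFn_succ' (fun j => A - E j), List.concat_eq_append, ← Multiset.coe_add,
        Multiset.coe_singleton, hls]
    rw [hsplitD, hsplitE, ← hrec, add_assoc, hpair, ← add_assoc]

private lemma master {R : Type*} [CommRing R] [IsDomain R] [IsPrincipalIdealRing R]
    {m : ℕ} (a : Fin (m + 2) → R) (ha1 : a 0 ≠ 0)
    (g : ℕ → R)
    (hg : ∀ t, Ideal.span {g t} = Ideal.span {x | ∃ i : Fin (m + 2), (i : ℕ) ≤ t ∧ x = a i})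
    (c : Fin (m + 1) → R)
    (hc : ∀ j, Ideal.span {c j} = Ideal.span {a 0, a j.succ})
    (d : Fin m → R)
    (hd : ∀ i : Fin m, d i * (c i.succ * g ((i : ℕ) + 1)) = a 0 * g ((i : ℕ) + 2))
    (q : R) (hq : Prime q) :
    (∀ i, d i ≠ 0) ∧
    (List.ofFn (fun i => multiplicity q (d i)) : Multiset ℕ)
      + {multiplicity q (a 0) - multiplicity q (g (m+1))}
      = (List.ofFn (fun j => multiplicity q (a 0) - multiplicity q (c j)) : Multiset ℕ) := by
  have hfin : ∀ x : R, x ≠ 0 → FiniteMultiplicity q x :=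
    fun x hx => FiniteMultiplicity.of_not_isUnit hq.not_isUnit hx
  have hkeyd : ∀ x : R, x ≠ 0 → ∀ k : ℕ, (q ^ k ∣ x ↔ k ≤ multiplicity q x) :=
    fun x hx k => ((hfin x hx).pow_dvd_iff_le_multiplicity)
  -- dvd characterizations
  have hdvd_g : ∀ t (y : R), (y ∣ g t ↔ ∀ i : Fin (m+2), (i:ℕ) ≤ t → y ∣ a i) := by
    intro t y
    rw [dvd_span_iff' (hg t)]
    constructor
    · intro h i hit; exact h (a i) ⟨i, hit, rfl⟩
    · rintro h z ⟨i, hit, rfl⟩; exact h i hit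
  have hdvd_c : ∀ (j : Fin (m+1)) (y : R), (y ∣ c j ↔ y ∣ a 0 ∧ y ∣ a j.succ) := by
    intro j y
    rw [dvd_span_iff' (hc j)]
    simp
  -- nonzeroness
  have hga : ∀ t : ℕ, g t ∣ a 0 := fun t => (hdvd_g t (g t)).mp dvd_rfl 0 (by simp)
  have hg0 : ∀ t : ℕ, g t ≠ 0 := by
    intro t h0
    exact ha1 (zero_dvd_iff.mp (h0 ▸ hga t))
  have hca : ∀ j, c j ∣ a 0 := fun j => ((hdvd_c j (c j)).mp dvd_rfl).1
  have hc0 : ∀ j, c j ≠ 0 := by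
    intro j h0
    exact ha1 (zero_dvd_iff.mp (h0 ▸ hca j))
  have hd0 : ∀ i : Fin m, d i ≠ 0 := by
    intro i h0
    have h := hd i
    rw [h0, zero_mul] at h
    exact (mul_ne_zero ha1 (hg0 _)) h.symm
  refine ⟨hd0, ?_⟩
  have hleA : ∀ x : R, x ≠ 0 → x ∣ a 0 → multiplicity q x ≤ multiplicity q (a 0) := by
    intro x hx hxa
    exact (hkeyd _ ha1 _).mp (((hkeyd _ hx _).mpr le_rfl).trans hxa)
  have hmul : ∀ x y : R, x ≠ 0 → y ≠ 0 →
      multiplicity q (x*y) = multiplicity q x + multiplicity q y :=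
    fun x y hx hy => multiplicity_mul hq (hfin _ (mul_ne_zero hx hy))
  -- the numerical data
  set A := multiplicity q (a 0) with hA
  set E : Fin (m+1) → ℕ := fun j => multiplicity q (c j) with hE
  set P : Fin (m+1) → ℕ := fun j => multiplicity q (g ((j:ℕ)+1)) with hP
  set D : Fin m → ℕ := fun i => multiplicity q (d i) with hD'
  -- g 0 is associated to a 0
  have hg0A : multiplicity q (g 0) = A := by
    have hiff : ∀ k : ℕ, q^k ∣ g 0 ↔ q^k ∣ a 0 := by
      intro k; rw [hdvd_g]
      constructor
      · intro h; exact h 0 (by simp)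
      · intro h i hi
        have hi0 : i = 0 := by
          have := Nat.le_zero.mp hi
          exact Fin.ext (by simpa using this)
        rw [hi0]; exact h
    exact le_antisymm
      ((hkeyd _ ha1 _).mp ((hiff _).mp ((hkeyd _ (hg0 0) _).mpr le_rfl)))
      ((hkeyd _ (hg0 0) _).mp ((hiff _).mpr ((hkeyd _ ha1 _).mpr le_rfl)))
  -- recursion for g
  have hgstep : ∀ j : Fin (m+1),
      multiplicity q (g ((j:ℕ)+1)) = min (multiplicity q (g (j:ℕ))) (multiplicity q (c j)) := by
    intro j
    have hiff : ∀ k : ℕ, q^k ∣ g ((j:ℕ)+1) ↔ q^k ∣ g (j:ℕ) ∧ q^k ∣ c j := by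
      intro k
      rw [hdvd_g, hdvd_c, hdvd_g]
      constructor
      · intro h
        exact ⟨fun i hi => h i (hi.trans (Nat.le_succ _)), h 0 (by simp),
          h j.succ (by simp)⟩
      · rintro ⟨h1, _, h2⟩ i hi
        rcases Nat.lt_or_ge (i:ℕ) ((j:ℕ)+1) with hlt | hge
        · exact h1 i (Nat.lt_succ_iff.mp hlt)
        · have hij : i = j.succ := Fin.ext (by simpa using le_antisymm hi hge)
          rw [hij]; exact h2
    apply le_antisymm
    · have h1 := (hiff _).mp ((hkeyd _ (hg0 _) _).mpr le_rfl)
      exact le_min ((hkeyd _ (hg0 _) _).mp h1.1) ((hkeyd _ (hc0 _) _).mp h1.2)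
    · apply (hkeyd _ (hg0 _) _).mp
      exact (hiff _).mpr ⟨(hkeyd _ (hg0 _) _).mpr (min_le_left _ _),
        (hkeyd _ (hc0 _) _).mpr (min_le_right _ _)⟩
  -- hypotheses of combin'
  have hEA : ∀ j, E j ≤ A := fun j => hleA _ (hc0 j) (hca j)
  have hPA : ∀ j, P j ≤ A := fun j => hleA _ (hg0 _) (hga _)
  have hP0 : P 0 = E 0 := by
    have := hgstep 0
    simp only [Fin.val_zero, hg0A] at this
    simpa [hP, hE] using this.trans (min_eq_right (hEA 0))
  have hPs : ∀ j : Fin m, P j.succ = min (P j.castSucc) (E j.succ) := by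
    intro j
    have := hgstep j.succ
    simpa [hP, hE, Fin.val_succ, Fin.coe_castSucc] using this
  have hDq : ∀ i : Fin m, D i + (E i.succ + P i.castSucc) = A + P i.succ := by
    intro i
    have h := congrArg (multiplicity q) (hd i)
    rw [hmul _ _ (hd0 i) (mul_ne_zero (hc0 _) (hg0 _)), hmul _ _ (hc0 _) (hg0 _),
      hmul _ _ ha1 (hg0 _)] at h
    simpa [hD', hE, hP, hA, Fin.val_succ, Fin.coe_castSucc, add_assoc] using h
  have hmain := combin' A m E P D hEA hPA hP0 hPs hDq
  have hlast : P (Fin.last m) = multiplicity q (g (m+1)) := by simp [hP]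
  rw [← hlast]
  exact hmain

/-- Lemma `permutation`: for any permutation `π` of `{2,…,n}`, and any prime
`q` of `R`, the multiset of `q`-parts of `d₂,…,d_{n−1}` (defined from
`(a₂,…,aₙ)`) coincides with that of `d₂',…,d_{n−1}'` (defined from the
permuted tuple). Equality of `q`-parts is expressed as equality of `q`-adic
valuations: `∀ k, q^k ∣ dᵢ ↔ q^k ∣ d'_{σ(i)}`. Here `n = m + 2`;
`g t` (resp. `g' t`) is a gcd of `a₁,…,a_{t+1}` (resp. of the permuted tuple),
`c j` is a gcd of `a₁` and `a_{j+2}`, and `d i` (paper index `i+2`) is defined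
by the exact-division identity
`d i · ((a₁,a_{i+3})·(a₁,…,a_{i+2})) = a₁·(a₁,…,a_{i+3})`. -/
theorem stmt_17 {R : Type*} [CommRing R] [IsDomain R] [IsPrincipalIdealRing R]
    {m : ℕ} (hm : 1 ≤ m) (a : Fin (m + 2) → R) (ha1 : a 0 ≠ 0)
    (hgcd : Ideal.span (Set.range a) = ⊤)
    (π : Equiv.Perm (Fin (m + 1)))
    (a' : Fin (m + 2) → R) (ha'0 : a' 0 = a 0)
    (ha' : ∀ j : Fin (m + 1), a' j.succ = a (π j).succ)
    (g g' : ℕ → R)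
    (hg : ∀ t, Ideal.span {g t} =
      Ideal.span {x | ∃ i : Fin (m + 2), (i : ℕ) ≤ t ∧ x = a i})
    (hg' : ∀ t, Ideal.span {g' t} =
      Ideal.span {x | ∃ i : Fin (m + 2), (i : ℕ) ≤ t ∧ x = a' i})
    (c c' : Fin (m + 1) → R)
    (hc : ∀ j, Ideal.span {c j} = Ideal.span {a 0, a j.succ})
    (hc' : ∀ j, Ideal.span {c' j} = Ideal.span {a' 0, a' j.succ})
    (d d' : Fin m → R)
    (hd : ∀ i : Fin m, d i * (c i.succ * g ((i : ℕ) + 1)) = a 0 * g ((i : ℕ) + 2))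
    (hd' : ∀ i : Fin m, d' i * (c' i.succ * g' ((i : ℕ) + 1)) = a' 0 * g' ((i : ℕ) + 2)) :
    ∀ q : R, Prime q → ∃ σ : Equiv.Perm (Fin m),
      ∀ (i : Fin m) (k : ℕ), q ^ k ∣ d i ↔ q ^ k ∣ d' (σ i) := by
  intro q hq
  have ha1' : a' 0 ≠ 0 := by rw [ha'0]; exact ha1
  obtain ⟨hd0, hmeq⟩ := master a ha1 g hg c hc d hd q hq
  obtain ⟨hd0', hmeq'⟩ := master a' ha1' g' hg' c' hc' d' hd' q hq
  have hfin : ∀ x : R, x ≠ 0 → FiniteMultiplicity q x :=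
    fun x hx => FiniteMultiplicity.of_not_isUnit hq.not_isUnit hx
  have hkeyd : ∀ x : R, x ≠ 0 → ∀ k : ℕ, (q ^ k ∣ x ↔ k ≤ multiplicity q x) :=
    fun x hx k => ((hfin x hx).pow_dvd_iff_le_multiplicity)
  rw [ha'0] at hmeq'
  -- the ranges of `a` and `a'` agree
  have hrange : Set.range a' = Set.range a := by
    ext x
    constructor
    · rintro ⟨i, rfl⟩
      cases i using Fin.cases with
      | zero => exact ⟨0, ha'0.symm⟩
      | succ j => exact ⟨(π j).succ, (ha' j).symm⟩
    · rintro ⟨i, rfl⟩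
      cases i using Fin.cases with
      | zero => exact ⟨0, ha'0⟩
      | succ j => exact ⟨(π.symm j).succ, by rw [ha' (π.symm j), Equiv.apply_symm_apply]⟩
  have hSa : {x | ∃ i : Fin (m + 2), (i : ℕ) ≤ m + 1 ∧ x = a i} = Set.range a := by
    ext x
    constructor
    · rintro ⟨i, _, rfl⟩; exact ⟨i, rfl⟩
    · rintro ⟨i, rfl⟩; exact ⟨i, Nat.lt_succ_iff.mp i.isLt, rfl⟩
  have hSa' : {x | ∃ i : Fin (m + 2), (i : ℕ) ≤ m + 1 ∧ x = a' i} = Set.range a' := by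
    ext x
    constructor
    · rintro ⟨i, _, rfl⟩; exact ⟨i, rfl⟩
    · rintro ⟨i, rfl⟩; exact ⟨i, Nat.lt_succ_iff.mp i.isLt, rfl⟩
  have hgg' : multiplicity q (g' (m+1)) = multiplicity q (g (m+1)) := by
    have hspan : Ideal.span {g' (m+1)} = Ideal.span {g (m+1)} := by
      rw [hg', hg, hSa', hSa, hrange]
    exact multiplicity_eq_of_associated_right
      (Ideal.span_singleton_eq_span_singleton.mp hspan.symm).symm
  have hcc' : ∀ j, multiplicity q (c' j) = multiplicity q (c (π j)) := by
    intro j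
    have hspan : Ideal.span {c' j} = Ideal.span {c (π j)} := by
      rw [hc' j, ha'0, ha' j, hc (π j)]
    exact multiplicity_eq_of_associated_right
      (Ideal.span_singleton_eq_span_singleton.mp hspan.symm).symm
  -- match the right-hand sides
  have hR : (List.ofFn (fun j => multiplicity q (a 0) - multiplicity q (c' j)) : Multiset ℕ)
      = (List.ofFn (fun j => multiplicity q (a 0) - multiplicity q (c j)) : Multiset ℕ) := by
    apply Multiset.coe_eq_coe.mpr
    have hfun : (fun j => multiplicity q (a 0) - multiplicity q (c' j))
        = (fun j => multiplicity q (a 0) - multiplicity q (c j)) ∘ π := by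
      funext j; simp [hcc' j]
    rw [hfun]
    exact π.ofFn_comp_perm _
  rw [hgg', hR] at hmeq'
  have hDeq : (List.ofFn (fun i => multiplicity q (d i)) : Multiset ℕ)
      = (List.ofFn (fun i => multiplicity q (d' i)) : Multiset ℕ) := by
    have := hmeq.trans hmeq'.symm
    exact add_right_cancel this
  obtain ⟨σ, hσ⟩ := exists_perm_of_perm_ofFn (Multiset.coe_eq_coe.mp hDeq)
  refine ⟨σ, fun i k => ?_⟩
  rw [hkeyd _ (hd0 i) k, hkeyd _ (hd0' (σ i)) k, hσ i]
end

section
/- Suppose R is a principal ideal domain and let a ∈ R^n be the column vector with entries a_1,…,a_n. If E ∈ GL_n(R) satisfies E·a = e_1, where e_1 is the first standard basis vector of R^n, then rows 2,…,n of E form an R-basis of S. In particular, S is a free R-module of rank n−1. -/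
/-- If `E ∈ GLₙ(R)` satisfies `E·a = e₁`, then rows `2,…,n` of `E` form an
`R`-basis of `S`; in particular `S` is free of rank `n − 1`.
Here `n = m + 1`. -/
theorem stmt_19 {R : Type*} [CommRing R] [IsDomain R] [IsPrincipalIdealRing R]
    {m : ℕ} (hm : 1 ≤ m) (a : Fin (m + 1) → R)
    (huni : Ideal.span (Set.range a) = ⊤)
    (S : Submodule R (Fin (m + 1) → R))
    (hS : ∀ x, x ∈ S ↔ ∑ i, a i * x i = 0)
    (E : Matrix (Fin (m + 1)) (Fin (m + 1)) R) (hE : IsUnit E.det)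
    (hEa : E.mulVec a = Pi.single 0 1) :
    (∃ b : Module.Basis (Fin m) R S,
      ∀ (i : Fin m) (j : Fin (m + 1)), (b i : Fin (m + 1) → R) j = E i.succ j) ∧
    Module.Free R S ∧ Module.finrank R S = m := by
  classical
  have hinv : Invertible E := E.invertibleOfIsUnitDet hE
  -- rows `i.succ` lie in `S`
  have hmem : ∀ i : Fin m, (fun j => E i.succ j) ∈ S := by
    intro i
    rw [hS]
    have h := congrFun hEa i.succ
    simp only [Matrix.mulVec, dotProduct,
      Pi.single_eq_of_ne (Fin.succ_ne_zero i)] at h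
    calc ∑ j, a j * E i.succ j = ∑ j, E i.succ j * a j := by
          simp [mul_comm]
      _ = 0 := h
  set v : Fin m → S := fun i => ⟨fun j => E i.succ j, hmem i⟩ with hv
  -- the linear equivalence given by `vecMul` with `E`
  let e : (Fin (m + 1) → R) ≃ₗ[R] (Fin (m + 1) → R) :=
    LinearEquiv.ofLinear E.vecMulLinear (⅟E).vecMulLinear
      (LinearMap.ext fun x => by
        simp [Matrix.vecMul_vecMul, invOf_mul_self, Matrix.vecMul_one])
      (LinearMap.ext fun x => by
        simp [Matrix.vecMul_vecMul, mul_invOf_self, Matrix.vecMul_one])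
  have hli : LinearIndependent R v := by
    have hrows : LinearIndependent R (fun k : Fin (m + 1) => (fun j => E k j)) := by
      have := ((Pi.basisFun R (Fin (m + 1))).map e).linearIndependent
      convert this with k
      simp [e, Pi.basisFun_apply, Matrix.single_vecMul]
    have hcomp : LinearIndependent R ((fun k : Fin (m + 1) => (fun j => E k j)) ∘ Fin.succ) :=
      hrows.comp Fin.succ (Fin.succ_injective m)
    exact hcomp.of_comp S.subtype
  have hspan : ⊤ ≤ Submodule.span R (Set.range v) := by
    rintro ⟨x, hx⟩ -
    set c : Fin (m + 1) → R := Matrix.vecMul x (⅟E) with hc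
    have hxc : x = Matrix.vecMul c E := by
      rw [hc, Matrix.vecMul_vecMul, invOf_mul_self, Matrix.vecMul_one]
    have hc0 : c 0 = 0 := by
      have hfx : ∑ i, a i * x i = 0 := (hS x).mp hx
      have : dotProduct x a = dotProduct c (E.mulVec a) := by
        rw [hxc, Matrix.dotProduct_mulVec]
      rw [hEa, dotProduct_single, mul_one] at this
      rw [← this]
      rw [← hfx]
      simp [dotProduct, mul_comm]
    have hxsum : (⟨x, hx⟩ : S) = ∑ i : Fin m, c i.succ • v i := by
      apply Subtype.ext
      simp only [AddSubmonoid.coe_finset_sum, Submodule.coe_toAddSubmonoid,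
        SetLike.val_smul]
      ext j
      rw [hxc]
      simp only [Matrix.vecMul, dotProduct]
      rw [Fin.sum_univ_succ]
      simp [hc0, v, Finset.sum_apply]
    rw [hxsum]
    exact Submodule.sum_mem _ fun i _ =>
      Submodule.smul_mem _ _ (Submodule.subset_span ⟨i, rfl⟩)
  let b : Module.Basis (Fin m) R S := Module.Basis.mk hli hspan
  refine ⟨⟨b, ?_⟩, Module.Free.of_basis b, ?_⟩
  · intro i j
    simp [b, Module.Basis.mk_apply, v]
  · rw [Module.finrank_eq_card_basis b, Fintype.card_fin]
end
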